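/- Let p ∈ ℕ (p ≥ 1). On the vertex set {1, …, p+3} define the p-simplices σ_j := {1, …, p+2} \ {j} and ρ_j := ({1, …, p+1} ∪ {p+3}) \ {j} for j ∈ {1, …, p+1}, and let L_p := {τ ⊆ {1, …, p+3} : τ ≠ ∅ and (τ ⊆ σ_j or τ ⊆ ρ_j for some j ∈ {1, …, p+1})}. Then L_p is a simplicial complex of dimension p, and L_p does not contain the boundary of a (p+1)-simplex; that is, there is no (p+2)-element subset S ⊆ {1, …, p+3} such that every (p+1)-element subset of S belongs to L_p. -/

import Mathlib

namespace RSC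

variable {V : Type*} [DecidableEq V]

/-- A finite abstract simplicial complex on vertex type `V`. -/
structure SC (V : Type*) [DecidableEq V] where
  simplices : Finset (Finset V)
  nonempty_mem : ∀ σ ∈ simplices, σ.Nonempty
  down_closed : ∀ σ ∈ simplices, ∀ τ ⊆ σ, τ.Nonempty → τ ∈ simplices

namespace SC

/-- The `p`-simplices (cardinality `p+1`). -/
def simplicesDim (K : SC V) (p : ℕ) : Finset (Finset V) :=
  K.simplices.filter fun σ => σ.card = p + 1

/-- The number of `p`-simplices. -/
def fnum (K : SC V) (p : ℕ) : ℕ := (K.simplicesDim p).card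

/-- The dimension of a finite simplicial complex. -/
def dimension (K : SC V) : ℕ := K.simplices.sup fun σ => σ.card - 1

/-- The `p`-th chain group over `ℤ₂`. -/
abbrev Chain (K : SC V) (p : ℕ) : Type _ := ↥(K.simplicesDim p) → ZMod 2

/-- The boundary map `∂_{p+1} : C_{p+1} → C_p`. -/
def boundary (K : SC V) (p : ℕ) : Chain K (p + 1) →ₗ[ZMod 2] Chain K p where
  toFun f := fun τ => ∑ σ : ↥(K.simplicesDim (p + 1)),
    if (τ : Finset V) ⊆ (σ : Finset V) then f σ else 0
  map_add' f g := by
    funext τ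
    simp only [Pi.add_apply]
    rw [← Finset.sum_add_distrib]
    refine Finset.sum_congr rfl fun σ _ => ?_
    split <;> simp
  map_smul' c f := by
    funext τ
    simp only [Pi.smul_apply, smul_eq_mul, RingHom.id_apply]
    rw [Finset.mul_sum]
    refine Finset.sum_congr rfl fun σ _ => ?_
    split <;> simp

/-- The rank of the cycle space `Z_p = ker ∂_p` (with `∂_0 = 0`). -/
noncomputable def cycleRank (K : SC V) : ℕ → ℕ
  | 0 => Module.finrank (ZMod 2) (Chain K 0)
  | (q + 1) => Module.finrank (ZMod 2) (LinearMap.ker (K.boundary q))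

/-- The `p`-th Betti number over `ℤ₂`: `dim Z_p − dim B_p`. -/
noncomputable def betti (K : SC V) (p : ℕ) : ℕ :=
  K.cycleRank p - Module.finrank (ZMod 2) (LinearMap.range (K.boundary p))

/-- The induced subcomplex on a vertex set `I`. -/
def induced (K : SC V) (I : Finset V) : SC V where
  simplices := K.simplices.filter fun σ => σ ⊆ I
  nonempty_mem := fun σ hσ => K.nonempty_mem σ (Finset.mem_filter.mp hσ).1
  down_closed := fun σ hσ τ hτσ hτ => by
    rw [Finset.mem_filter] at hσ ⊢
    exact ⟨K.down_closed σ hσ.1 τ hτσ hτ, hτσ.trans hσ.2⟩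

/-- The `j`-skeleton. -/
def skeleton (K : SC V) (j : ℕ) : SC V where
  simplices := K.simplices.filter fun σ => σ.card ≤ j + 1
  nonempty_mem := fun σ hσ => K.nonempty_mem σ (Finset.mem_filter.mp hσ).1
  down_closed := fun σ hσ τ hτσ hτ => by
    rw [Finset.mem_filter] at hσ ⊢
    exact ⟨K.down_closed σ hσ.1 τ hτσ hτ, (Finset.card_le_card hτσ).trans hσ.2⟩

/-- The subcomplex obtained by deleting the vertex `v`. -/
def deleteVertex (K : SC V) (v : V) : SC V where
  simplices := K.simplices.filter fun σ => v ∉ σ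
  nonempty_mem := fun σ hσ => K.nonempty_mem σ (Finset.mem_filter.mp hσ).1
  down_closed := fun σ hσ τ hτσ hτ => by
    rw [Finset.mem_filter] at hσ ⊢
    exact ⟨K.down_closed σ hσ.1 τ hτσ hτ, fun hv => hσ.2 (hτσ hv)⟩

/-- The vertex set of `K`. -/
def verts (K : SC V) : Finset V := K.simplices.sup id

/-- `v` is a vertex of `K`. -/
def IsVertex (K : SC V) (v : V) : Prop := ({v} : Finset V) ∈ K.simplices

/-- The `n`-simplex degree of a vertex `v`. -/
def deg (K : SC V) (n : ℕ) (v : V) : ℕ :=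
  (K.simplices.filter fun σ => v ∈ σ ∧ σ.card = n + 1).card

/-- Two vertices are joined by a path of edges of `K`. -/
def Reachable (K : SC V) (v w : V) : Prop :=
  Relation.ReflTransGen (fun a b => ({a, b} : Finset V) ∈ K.simplices) v w

/-- The Euler characteristic of `K`. -/
noncomputable def euler (K : SC V) : ℤ :=
  ∑ i ∈ Finset.range (K.dimension + 1), (-1 : ℤ) ^ i * K.fnum i

end SC

end RSC

namespace RSC

open SC

/-- `σ_j = {1, …, p+2} \ {j}`. -/
def sigmaSimp (p j : ℕ) : Finset ℕ := (Finset.Icc 1 (p + 2)).erase j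

/-- `ρ_j = ({1, …, p+1} ∪ {p+3}) \ {j}`. -/
def rhoSimp (p j : ℕ) : Finset ℕ := ((Finset.Icc 1 (p + 1)) ∪ {p + 3}).erase j

/-- The defining property of the simplices of `L_p`: nonempty and contained in
some `σ_j` or `ρ_j` with `j ∈ {1, …, p+1}`. -/
def LpPred (p : ℕ) (τ : Finset ℕ) : Prop :=
  0 < τ.card ∧ ∃ j ∈ Finset.Icc 1 (p + 1), τ ⊆ sigmaSimp p j ∨ τ ⊆ rhoSimp p j

instance (p : ℕ) : DecidablePred (LpPred p) := fun τ => by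
  unfold LpPred; infer_instance

/-- The complex `L_p` generated by the `p`-simplices `σ_j, ρ_j`, `j ∈ {1, …, p+1}`. -/
def Lp (p : ℕ) : SC ℕ where
  simplices := (Finset.Icc 1 (p + 3)).powerset.filter (LpPred p)
  nonempty_mem := fun τ hτ =>
    Finset.card_pos.mp ((Finset.mem_filter.mp hτ).2 : LpPred p τ).1
  down_closed := fun τ hτ τ' hτ' hne => by
    rw [Finset.mem_filter, Finset.mem_powerset] at hτ ⊢
    obtain ⟨hsub, -, j, hj, hcase⟩ := hτ
    exact ⟨hτ'.trans hsub, Finset.card_pos.mpr hne, j, hj,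
      hcase.imp hτ'.trans hτ'.trans⟩

end RSC

namespace RSC
open SC

lemma mem_Lp_iff (p : ℕ) (τ : Finset ℕ) :
    τ ∈ (Lp p).simplices ↔ τ ⊆ Finset.Icc 1 (p + 3) ∧ LpPred p τ := by
  simp [Lp, Finset.mem_filter, Finset.mem_powerset]

lemma sigma_card (p j : ℕ) (hj : j ∈ Finset.Icc 1 (p + 1)) :
    (sigmaSimp p j).card = p + 1 := by
  have hjm : j ∈ Finset.Icc 1 (p + 2) := by
    rw [Finset.mem_Icc] at hj ⊢; omega
  rw [sigmaSimp, Finset.card_erase_of_mem hjm, Nat.card_Icc]; omega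

lemma rho_card (p j : ℕ) (hj : j ∈ Finset.Icc 1 (p + 1)) :
    (rhoSimp p j).card = p + 1 := by
  have hd : Disjoint (Finset.Icc 1 (p + 1)) ({p + 3} : Finset ℕ) := by
    simp [Finset.disjoint_singleton_right, Finset.mem_Icc]
  have hjm : j ∈ Finset.Icc 1 (p + 1) ∪ {p + 3} := Finset.mem_union_left _ hj
  rw [rhoSimp, Finset.card_erase_of_mem hjm, Finset.card_union_of_disjoint hd,
    Nat.card_Icc]
  simp

lemma Lp_card_le (p : ℕ) (τ : Finset ℕ) (hτ : τ ∈ (Lp p).simplices) :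
    τ.card ≤ p + 1 := by
  obtain ⟨-, -, j, hj, hcase⟩ := (mem_Lp_iff p τ).mp hτ
  rcases hcase with h | h
  · calc τ.card ≤ (sigmaSimp p j).card := Finset.card_le_card h
      _ = p + 1 := sigma_card p j hj
  · calc τ.card ≤ (rhoSimp p j).card := Finset.card_le_card h
      _ = p + 1 := rho_card p j hj

lemma sigma_mem_Lp (p : ℕ) : sigmaSimp p 1 ∈ (Lp p).simplices := by
  rw [mem_Lp_iff]
  refine ⟨?_, ?_, 1, ?_, Or.inl le_rfl⟩
  · exact (Finset.erase_subset _ _).trans (Finset.Icc_subset_Icc_right (by omega))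
  · rw [sigma_card p 1 (by simp [Finset.mem_Icc])]; omega
  · simp [Finset.mem_Icc]

end RSC

open RSC RSC.SC in
/-- `L_p` has dimension `p` and does not contain the boundary of a
`(p+1)`-simplex. -/
theorem Lp_dim_and_no_sphere (p : ℕ) (hp : 1 ≤ p) :
    (Lp p).dimension = p ∧
      ¬ ∃ S ⊆ Finset.Icc 1 (p + 3), S.card = p + 2 ∧
        ∀ τ ⊆ S, τ.card = p + 1 → τ ∈ (Lp p).simplices := by
  constructor
  · apply le_antisymm
    · apply Finset.sup_le
      intro σ hσ
      have := Lp_card_le p σ hσ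
      omega
    · have h := Finset.le_sup (f := fun σ => σ.card - 1) (sigma_mem_Lp p)
      rw [sigma_card p 1 (by simp [Finset.mem_Icc])] at h
      simpa [dimension] using h
  · rintro ⟨S, hS, hcard, hall⟩
    by_cases hboth : p + 2 ∈ S ∧ p + 3 ∈ S
    · -- pick k ∈ S with k ≠ p+2, p+3; use τ = S.erase k
      obtain ⟨h2, h3⟩ := hboth
      have hk : ∃ k ∈ S, k ≠ p + 2 ∧ k ≠ p + 3 := by
        by_contra hcon
        push_neg at hcon
        have : S ⊆ {p + 2, p + 3} := by
          intro x hx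
          by_cases h : x = p + 2
          · simp [h]
          · simp [hcon x hx h]
        have := Finset.card_le_card this
        have h22 : ({p + 2, p + 3} : Finset ℕ).card ≤ 2 :=
          Finset.card_insert_le _ _ |>.trans (by simp)
        omega
      obtain ⟨k, hkS, hk2, hk3⟩ := hk
      set τ := S.erase k with hτdef
      have hτS : τ ⊆ S := Finset.erase_subset _ _
      have hτcard : τ.card = p + 1 := by
        rw [hτdef, Finset.card_erase_of_mem hkS, hcard]; omega
      have hτ2 : p + 2 ∈ τ := Finset.mem_erase.mpr ⟨fun h => hk2 h.symm, h2⟩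
      have hτ3 : p + 3 ∈ τ := Finset.mem_erase.mpr ⟨fun h => hk3 h.symm, h3⟩
      obtain ⟨-, -, j, hj, hcase⟩ := (mem_Lp_iff p τ).mp (hall τ hτS hτcard)
      rcases hcase with h | h
      · have := h hτ3
        rw [sigmaSimp, Finset.mem_erase, Finset.mem_Icc] at this
        omega
      · have := h hτ2
        rw [rhoSimp, Finset.mem_erase, Finset.mem_union, Finset.mem_Icc,
          Finset.mem_singleton] at this
        omega
    · -- S misses p+2 or p+3, so Icc 1 (p+1) ⊆ S; use τ = Icc 1 (p+1)
      have hm : ∃ m, (m = p + 2 ∨ m = p + 3) ∧ m ∉ S := by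
        rcases not_and_or.mp hboth with h | h
        exacts [⟨p + 2, Or.inl rfl, h⟩, ⟨p + 3, Or.inr rfl, h⟩]
      obtain ⟨m, hmval, hmS⟩ := hm
      have hIccS : Finset.Icc 1 (p + 1) ⊆ S := by
        intro i hi
        by_contra hiS
        rw [Finset.mem_Icc] at hi
        have him : i ≠ m := by omega
        have hsub : S ⊆ ((Finset.Icc 1 (p + 3)).erase i).erase m := by
          intro x hx
          exact Finset.mem_erase.mpr ⟨fun h => hmS (h ▸ hx),
            Finset.mem_erase.mpr ⟨fun h => hiS (h ▸ hx), hS hx⟩⟩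
        have hle := Finset.card_le_card hsub
        have hi3 : i ∈ Finset.Icc 1 (p + 3) := by
          rw [Finset.mem_Icc]; omega
        have hmI : m ∈ (Finset.Icc 1 (p + 3)).erase i :=
          Finset.mem_erase.mpr ⟨fun h => him h.symm, by rw [Finset.mem_Icc]; omega⟩
        rw [Finset.card_erase_of_mem hmI, Finset.card_erase_of_mem hi3,
          Nat.card_Icc] at hle
        omega
      set τ := Finset.Icc 1 (p + 1) with hτdef
      have hτcard : τ.card = p + 1 := by rw [hτdef, Nat.card_Icc]; omega
      obtain ⟨-, -, j, hj, hcase⟩ := (mem_Lp_iff p τ).mp (hall τ hIccS hτcard)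
      have hjτ : j ∈ τ := hj
      rcases hcase with h | h
      · exact (Finset.mem_erase.mp (h hjτ)).1 rfl
      · exact (Finset.mem_erase.mp (h hjτ)).1 rfl
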